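/- Let R be a centrally essential ring. For every natural number n, all elements x_1, …, x_n, y_1, …, y_n, r of R: if x_1*y_1 + … + x_n*y_n = 1 and x_1*r*y_1 + … + x_n*r*y_n = 0, then r = 0. -/
import Mathlib


/-- A ring `R` is *centrally essential* if for every nonzero `r ∈ R` there is a central
element `c` such that `c * r` is a nonzero central element. -/
def IsCentrallyEssential (R : Type*) [Ring R] : Prop :=
  ∀ r : R, r ≠ 0 → ∃ c ∈ Subring.center R, c * r ≠ 0 ∧ c * r ∈ Subring.center R

theorem centrally_essential_quasi_identity
    (R : Type*) [Ring R] (hR : IsCentrallyEssential R)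
    (n : ℕ) (x y : Fin n → R) (r : R)
    (h1 : (∑ i, x i * y i) = 1)
    (h2 : (∑ i, x i * r * y i) = 0) :
    r = 0 := by
  by_contra hr
  obtain ⟨c, hc, hcr0, hcr⟩ := hR r hr
  rw [Subring.mem_center_iff] at hc hcr
  apply hcr0
  calc c * r = (c * r) * ∑ i, x i * y i := by rw [h1, mul_one]
    _ = ∑ i, (c * r) * (x i * y i) := Finset.mul_sum _ _ _
    _ = c * ∑ i, x i * r * y i := by
        rw [Finset.mul_sum]
        refine Finset.sum_congr rfl fun i _ => ?_
        calc (c * r) * (x i * y i) = (x i * (c * r)) * y i := by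
              rw [← mul_assoc, hcr]
          _ = ((c * x i) * r) * y i := by rw [← mul_assoc, hc]
          _ = c * (x i * r * y i) := by rw [mul_assoc c, mul_assoc c]
    _ = 0 := by rw [h2, mul_zero]
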